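/- Let a, a', l ∈ ℝ^n and b' ∈ ℝ. Let X := {x ∈ ℝ^n : a·x ≤ 0 ∧ x ≥ l} and Y := {x ∈ ℝ^n : a'·x ≤ b'}, and suppose X ≠ ∅. Then X ⊆ Y if and only if there exists λ ≥ 0 such that λa ≥ a' (componentwise) and −b' ≤ (λa − a')·l. -/

import Mathlib

open Matrix

private lemma dot_mono {n : ℕ} {v x y : Fin n → ℝ} (hv : 0 ≤ v) (hxy : x ≤ y) :
    v ⬝ᵥ x ≤ v ⬝ᵥ y :=
  Finset.sum_le_sum fun i _ => mul_le_mul_of_nonneg_left (hxy i) (hv i)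

private lemma ray_nonpos {p q b : ℝ} (h : ∀ t : ℝ, 0 ≤ t → p + t * q ≤ b) : q ≤ 0 := by
  by_contra hq
  push_neg at hq
  have h0 := h 0 le_rfl
  have ht := h ((b - p + 1) / q) (by
    apply div_nonneg _ hq.le
    linarith)
  rw [div_mul_cancel₀ _ (ne_of_gt hq)] at ht
  linarith

private lemma div_nn {a b : ℝ} (ha : a ≤ 0) (hb : b ≤ 0) : 0 ≤ a / b :=
  div_nonneg_iff.mpr (Or.inr ⟨ha, hb⟩)

private lemma single_apply_nonneg {n : ℕ} (i k : Fin n) {c : ℝ} (hc : 0 ≤ c) :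
    (0:ℝ) ≤ (Pi.single i c : Fin n → ℝ) k := by
  by_cases h : k = i <;> simp [Pi.single_apply, h, hc]

private lemma single_nonneg' {n : ℕ} (i : Fin n) {c : ℝ} (hc : 0 ≤ c) :
    (0 : Fin n → ℝ) ≤ Pi.single i c :=
  fun k => single_apply_nonneg i k hc

/-- For nonempty `X = {x : a·x ≤ 0 ∧ x ≥ l}` and `Y = {x : a'·x ≤ b'}`:
`X ⊆ Y` iff there is `λ ≥ 0` with `λa ≥ a'` and `-b' ≤ (λa - a')·l`. -/
theorem subset_iff_exists_lambda
    {n : ℕ} (a a' l : Fin n → ℝ) (b' : ℝ)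
    (hX : ∃ x : Fin n → ℝ, a ⬝ᵥ x ≤ 0 ∧ l ≤ x) :
    {x : Fin n → ℝ | a ⬝ᵥ x ≤ 0 ∧ l ≤ x} ⊆ {x : Fin n → ℝ | a' ⬝ᵥ x ≤ b'} ↔
      ∃ lam : ℝ, 0 ≤ lam ∧ a' ≤ lam • a ∧ -b' ≤ (lam • a - a') ⬝ᵥ l := by
  constructor
  · intro hsub
    obtain ⟨x₀, hx₀a, hx₀l⟩ := hX
    -- ray lemma: any nonnegative direction v with a·v ≤ 0 satisfies a'·v ≤ 0
    have ray : ∀ v : Fin n → ℝ, 0 ≤ v → a ⬝ᵥ v ≤ 0 → a' ⬝ᵥ v ≤ 0 := by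
      intro v hv hav
      apply ray_nonpos (p := a' ⬝ᵥ x₀) (b := b')
      intro t ht
      have hmem : x₀ + t • v ∈ {x : Fin n → ℝ | a ⬝ᵥ x ≤ 0 ∧ l ≤ x} := by
        constructor
        · rw [dotProduct_add, dotProduct_smul]
          have : t * (a ⬝ᵥ v) ≤ 0 := mul_nonpos_of_nonneg_of_nonpos ht hav
          simpa using add_nonpos hx₀a this
        · intro i
          have h1 : 0 ≤ t * v i := mul_nonneg ht (hv i)
          have h2 := hx₀l i
          simp only [Pi.add_apply, Pi.smul_apply, smul_eq_mul]
          linarith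
      have := hsub hmem
      simpa [dotProduct_add, dotProduct_smul] using this
    -- sign consequences
    have hZ : ∀ i, a i = 0 → a' i ≤ 0 := by
      intro i hi
      have := ray (Pi.single i 1) (single_nonneg' i zero_le_one)
        (by simp [dotProduct_single a 1 i, hi])
      simpa [dotProduct_single a' 1 i] using this
    have hNeg : ∀ i, a i < 0 → a' i ≤ 0 := by
      intro i hi
      have := ray (Pi.single i 1) (single_nonneg' i zero_le_one) (by
        simp only [dotProduct_single a 1 i, mul_one]
        exact hi.le)
      simpa [dotProduct_single a' 1 i] using this
    have hPN : ∀ j i, 0 < a j → a i < 0 → a' j / a j ≤ a' i / a i := by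
      intro j i hj hi
      have hji : j ≠ i := by rintro rfl; linarith
      have hvpos : (0:Fin n → ℝ) ≤ Pi.single j (1:ℝ) + Pi.single i (-(a j / a i)) := by
        have h1 : (0:ℝ) ≤ -(a j / a i) := by
          rw [neg_nonneg]
          exact div_nonpos_of_nonneg_of_nonpos hj.le hi.le
        intro k
        have hA := single_apply_nonneg (c := (1:ℝ)) j k zero_le_one
        have hB := single_apply_nonneg i k h1
        simp only [Pi.add_apply, Pi.zero_apply]
        linarith
      have hine : a i ≠ 0 := hi.ne
      have hane : a j ≠ 0 := hj.ne'
      have hav : a ⬝ᵥ (Pi.single j (1:ℝ) + Pi.single i (-(a j / a i))) = 0 := by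
        rw [dotProduct_add, dotProduct_single a _ j, dotProduct_single a _ i]
        field_simp
        ring
      have h := ray _ hvpos (le_of_eq hav)
      rw [dotProduct_add, dotProduct_single a' _ j, dotProduct_single a' _ i] at h
      -- h : a' j * 1 + a' i * (-(a j / a i)) ≤ 0
      have h2 : a' j ≤ a' i * (a j / a i) := by linarith
      calc a' j / a j ≤ a' i * (a j / a i) / a j := by
            exact div_le_div_of_nonneg_right h2 hj.le
        _ = a' i / a i := by
            field_simp
    -- feasible point coming from a coordinate j with  0 ≤ -(a⬝ᵥl)/a j
    have hpt : ∀ j : Fin n, a j ≠ 0 → 0 ≤ -(a ⬝ᵥ l) / a j →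
        a' j / a j * -(a ⬝ᵥ l) ≤ b' - a' ⬝ᵥ l := by
      intro j hj hcj
      obtain ⟨w, hw⟩ : ∃ w : Fin n → ℝ, w = Pi.single j 1 := ⟨_, rfl⟩
      have hmem : l + (-(a ⬝ᵥ l) / a j) • w ∈
          {x : Fin n → ℝ | a ⬝ᵥ x ≤ 0 ∧ l ≤ x} := by
        constructor
        · rw [dotProduct_add, dotProduct_smul, hw, dotProduct_single a 1 j]
          simp only [smul_eq_mul, mul_one]
          rw [div_mul_cancel₀ _ hj]
          simp
        · intro i
          have h1 : (0:ℝ) ≤ w i := by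
            rw [hw]; exact single_apply_nonneg j i zero_le_one
          have h2 : 0 ≤ (-(a ⬝ᵥ l) / a j) * w i := mul_nonneg hcj h1
          simp only [Pi.add_apply, Pi.smul_apply, smul_eq_mul]
          linarith
      have h := hsub hmem
      rw [Set.mem_setOf_eq, dotProduct_add, dotProduct_smul, hw,
        dotProduct_single a' 1 j] at h
      simp only [smul_eq_mul, mul_one] at h
      have : -(a ⬝ᵥ l) / a j * a' j ≤ b' - a' ⬝ᵥ l := by linarith
      calc a' j / a j * -(a ⬝ᵥ l) = -(a ⬝ᵥ l) / a j * a' j := by ring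
        _ ≤ b' - a' ⬝ᵥ l := this
    by_cases hc : a ⬝ᵥ l ≤ 0
    · -- case c = -(a⬝ᵥl) ≥ 0 : take lam = max(0, max over {a i > 0} of a' i / a i)
      set F : Finset ℝ :=
        insert 0 (Finset.univ.image fun i => if 0 < a i then a' i / a i else 0) with hF
      have h0F : (0:ℝ) ∈ F := Finset.mem_insert_self _ _
      have hFne : F.Nonempty := ⟨0, h0F⟩
      set lam := F.max' hFne with hlamdef
      have hlam0 : 0 ≤ lam := Finset.le_max' F 0 h0F
      have hub : ∀ i, 0 < a i → a' i / a i ≤ lam := by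
        intro i hi
        apply Finset.le_max'
        refine Finset.mem_insert_of_mem (Finset.mem_image.mpr ⟨i, Finset.mem_univ i, ?_⟩)
        rw [if_pos hi]
      -- every member of F is ≤ a' i / a i  for i with a i < 0
      have hmemF : ∀ y ∈ F, ∀ i, a i < 0 → y ≤ a' i / a i := by
        intro y hy i hi
        have hnn : 0 ≤ a' i / a i := div_nn (hNeg i hi) hi.le
        rcases Finset.mem_insert.mp hy with h | h
        · rw [h]; exact hnn
        · obtain ⟨j, _, rfl⟩ := Finset.mem_image.mp h
          by_cases hj : 0 < a j
          · rw [if_pos hj]; exact hPN j i hj hi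
          · rw [if_neg hj]; exact hnn
      refine ⟨lam, hlam0, ?_, ?_⟩
      · intro i
        simp only [Pi.smul_apply, smul_eq_mul]
        rcases lt_trichotomy (a i) 0 with hi | hi | hi
        · have := hmemF lam (Finset.max'_mem F hFne) i hi
          exact (le_div_iff_of_neg hi).mp this
        · rw [hi, mul_zero]; exact hZ i hi
        · exact (div_le_iff₀ hi).mp (hub i hi)
      · -- key inequality lam * -(a⬝ᵥl) ≤ b' - a'⬝ᵥl
        have key : lam * -(a ⬝ᵥ l) ≤ b' - a' ⬝ᵥ l := by
          have h0d : 0 ≤ b' - a' ⬝ᵥ l := by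
            have := hsub (show l ∈ _ from ⟨hc, le_rfl⟩)
            rw [Set.mem_setOf_eq] at this
            linarith
          have hlmem := Finset.max'_mem F hFne
          rw [← hlamdef] at hlmem
          rcases Finset.mem_insert.mp hlmem with h | h
          · rw [h, zero_mul]; exact h0d
          · obtain ⟨j, _, hj⟩ := Finset.mem_image.mp h
            by_cases hja : 0 < a j
            · rw [if_pos hja] at hj
              rw [← hj]
              exact hpt j hja.ne' (div_nonneg (by linarith) hja.le)
            · rw [if_neg hja] at hj
              rw [← hj, zero_mul]; exact h0d
        rw [sub_dotProduct, smul_dotProduct, smul_eq_mul]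
        linarith [key]
    · -- case -(a⬝ᵥl) < 0 : some a k < 0; take lam = min over {a i < 0} of a' i / a i
      push_neg at hc
      have hex : ∃ k, a k < 0 := by
        by_contra hno
        push_neg at hno
        have := dot_mono (v := a) hno hx₀l
        linarith
      obtain ⟨k, hk⟩ := hex
      set G : Finset (Fin n) := Finset.univ.filter (fun i => a i < 0) with hG
      have hGne : G.Nonempty := ⟨k, Finset.mem_filter.mpr ⟨Finset.mem_univ k, hk⟩⟩
      set lam := G.inf' hGne (fun i => a' i / a i) with hlamdef
      obtain ⟨k₀, hk₀G, hk₀⟩ := Finset.exists_mem_eq_inf' hGne (fun i => a' i / a i)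
      have hk₀neg : a k₀ < 0 := (Finset.mem_filter.mp hk₀G).2
      have hlam0 : 0 ≤ lam := by
        rw [hlamdef, hk₀]
        exact div_nn (hNeg k₀ hk₀neg) hk₀neg.le
      have hlb : ∀ i, a i < 0 → lam ≤ a' i / a i := by
        intro i hi
        exact Finset.inf'_le _ (Finset.mem_filter.mpr ⟨Finset.mem_univ i, hi⟩)
      refine ⟨lam, hlam0, ?_, ?_⟩
      · intro i
        simp only [Pi.smul_apply, smul_eq_mul]
        rcases lt_trichotomy (a i) 0 with hi | hi | hi
        · exact (le_div_iff_of_neg hi).mp (hlb i hi)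
        · rw [hi, mul_zero]; exact hZ i hi
        · have : a' i / a i ≤ lam := by
            rw [hlamdef]
            apply Finset.le_inf'
            intro j hj
            exact hPN i j hi (Finset.mem_filter.mp hj).2
          exact (div_le_iff₀ hi).mp this
      · have key : lam * -(a ⬝ᵥ l) ≤ b' - a' ⬝ᵥ l := by
          rw [hlamdef, hk₀]
          exact hpt k₀ hk₀neg.ne
            (div_nn (by linarith) hk₀neg.le)
        rw [sub_dotProduct, smul_dotProduct, smul_eq_mul]
        linarith [key]
  · rintro ⟨lam, hlam, hle, hbl⟩ x ⟨hax, hlx⟩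
    have h1 : (lam • a - a') ⬝ᵥ l ≤ (lam • a - a') ⬝ᵥ x := by
      apply dot_mono _ hlx
      intro i
      have := hle i
      simp only [Pi.sub_apply, Pi.smul_apply, smul_eq_mul, Pi.zero_apply] at *
      linarith
    have h2 : (lam • a - a') ⬝ᵥ x = lam * (a ⬝ᵥ x) - a' ⬝ᵥ x := by
      rw [sub_dotProduct, smul_dotProduct, smul_eq_mul]
    have h3 : lam * (a ⬝ᵥ x) ≤ 0 := mul_nonpos_of_nonneg_of_nonpos hlam hax
    show a' ⬝ᵥ x ≤ b'
    rw [h2] at h1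
    linarith
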